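/- Fix integers d, k ≥ 1. Let U = (U_1, ..., U_d) be uniformly distributed on [0,1]^d, and for each integer s ≥ 2 define q_s(U) = F_{s−1, p}(2k−2) at p = ∏_{j=1}^d U_j, where F_{m,p}(r) = P(Binomial(m,p) ≤ r) is the Binomial cumulative distribution function. Then limsup_{s→∞} [ (d−1)! · s / (2k · (log s)^d) ] · P( q_s(U) ≥ 1/s² ) ≤ 1. -/

import Mathlib

open MeasureTheory Finset

/-- The `Binomial(m, p)` cumulative distribution function evaluated at `r`. -/
noncomputable def binomCDF (m : ℕ) (p : ℝ) (r : ℕ) : ℝ :=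
  ∑ j ∈ Finset.range (r + 1), (m.choose j : ℝ) * p ^ j * (1 - p) ^ (m - j)

noncomputable def tailF (d : ℕ) (t : ℝ) : ℝ :=
  t * ∑ i ∈ Finset.range d, (-Real.log t) ^ i / (i.factorial : ℝ)

lemma tailF_nonneg {d : ℕ} {t : ℝ} (ht0 : 0 < t) (ht1 : t ≤ 1) : 0 ≤ tailF d t := by
  have hl : 0 ≤ -Real.log t := by
    have := Real.log_nonpos (le_of_lt ht0) ht1
    linarith
  apply mul_nonneg ht0.le
  apply Finset.sum_nonneg
  intro i _
  positivity

lemma continuousOn_tailF_comp {d : ℕ} {t : ℝ} (ht0 : 0 < t) :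
    ContinuousOn (fun u : ℝ => tailF d (t / u)) (Set.Icc t 1) := by
  have hne : ∀ u ∈ Set.Icc t 1, u ≠ 0 := fun u hu => by
    have := hu.1; intro h; rw [h] at this; linarith
  have hdiv : ContinuousOn (fun u : ℝ => t / u) (Set.Icc t 1) :=
    continuousOn_const.div continuousOn_id hne
  unfold tailF
  apply ContinuousOn.mul hdiv
  apply continuousOn_finset_sum
  intro i _
  apply ContinuousOn.div_const
  apply ContinuousOn.pow
  apply ContinuousOn.neg
  apply Real.continuousOn_log.comp hdiv
  intro u hu
  simp only [Set.mem_compl_iff, Set.mem_singleton_iff]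
  have hu0 : 0 < u := lt_of_lt_of_le ht0 hu.1
  positivity

lemma integral_piece (i : ℕ) {t : ℝ} (ht0 : 0 < t) (ht1 : t < 1) :
    ∫ u in t..1, (t / u) * (Real.log u - Real.log t) ^ i / (i.factorial : ℝ)
      = t * (-Real.log t) ^ (i + 1) / ((i + 1).factorial : ℝ) := by
  have hcont : ContinuousOn
      (fun x : ℝ => (t / x) * (Real.log x - Real.log t) ^ i / (i.factorial : ℝ))
      (Set.uIcc t 1) := by
    rw [Set.uIcc_of_le ht1.le]
    have hne : ∀ u ∈ Set.Icc t 1, u ≠ 0 := fun u hu => by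
      have := hu.1; intro h; rw [h] at this; linarith
    apply ContinuousOn.div_const
    apply ContinuousOn.mul (continuousOn_const.div continuousOn_id hne)
    apply ContinuousOn.pow
    apply ContinuousOn.sub _ continuousOn_const
    apply Real.continuousOn_log.mono
    intro u hu
    simp only [Set.mem_compl_iff, Set.mem_singleton_iff]
    exact hne u hu
  have key : ∀ x ∈ Set.uIcc t 1, HasDerivAt
      (fun u => t * (Real.log u - Real.log t) ^ (i+1) / ((i+1).factorial : ℝ))
      ((t / x) * (Real.log x - Real.log t) ^ i / (i.factorial : ℝ)) x := by
    intro x hx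
    rw [Set.uIcc_of_le ht1.le] at hx
    have hx0 : 0 < x := lt_of_lt_of_le ht0 hx.1
    have h1 : HasDerivAt (fun u : ℝ => Real.log u - Real.log t) (1/x) x := by
      simpa using (Real.hasDerivAt_log hx0.ne').sub_const (Real.log t)
    have h2 := ((h1.pow (i+1)).const_mul t).div_const ((i+1).factorial : ℝ)
    refine h2.congr_deriv ?_
    have hfac : ((i+1).factorial : ℝ) = (i+1) * (i.factorial : ℝ) := by
      push_cast [Nat.factorial_succ]; ring
    have hif : (i.factorial : ℝ) ≠ 0 := by positivity
    rw [hfac, Nat.add_sub_cancel]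
    push_cast
    field_simp
  rw [intervalIntegral.integral_eq_sub_of_hasDerivAt key hcont.intervalIntegrable]
  rw [Real.log_one]
  rw [sub_self, zero_pow (Nat.succ_ne_zero i)]
  ring

lemma integrableOn_G (d : ℕ) {t : ℝ} (ht0 : 0 < t) (ht1 : t < 1) :
    IntegrableOn (fun u : ℝ => if u ≤ t then (1:ℝ) else tailF d (t/u)) (Set.Icc 0 1) := by
  set G := fun u : ℝ => if u ≤ t then (1:ℝ) else tailF d (t/u) with hG
  have h1 : IntegrableOn G (Set.Icc 0 t) := by
    have hc : IntegrableOn (fun _ : ℝ => (1:ℝ)) (Set.Icc 0 t) :=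
      integrableOn_const measure_Icc_lt_top.ne
    apply hc.congr_fun (fun u hu => by simp [hG, hu.2]) measurableSet_Icc
  have h2 : IntegrableOn G (Set.Icc t 1) := by
    have hc : IntegrableOn (fun u : ℝ => tailF d (t/u)) (Set.Icc t 1) :=
      (continuousOn_tailF_comp ht0).integrableOn_Icc
    apply hc.congr
    have hsing : ∀ᵐ u ∂(volume.restrict (Set.Icc t 1)), u ≠ t := by
      apply ae_restrict_of_ae
      rw [MeasureTheory.ae_iff]
      have : {u : ℝ | ¬ u ≠ t} = {t} := by ext u; simp
      rw [this]
      exact Real.volume_singleton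
    filter_upwards [ae_restrict_mem measurableSet_Icc, hsing]
    intro u hu hne
    have : ¬ u ≤ t := not_le.mpr (lt_of_le_of_ne hu.1 (Ne.symm hne))
    simp [hG, this]
  exact (h1.union h2).mono_set (by
    intro u hu
    rcases le_or_gt u t with h | h
    · exact Or.inl ⟨hu.1, h⟩
    · exact Or.inr ⟨h.le, hu.2⟩)

lemma integral_G (d : ℕ) {t : ℝ} (ht0 : 0 < t) (ht1 : t < 1) :
    ∫ u in Set.Icc (0:ℝ) 1, (if u ≤ t then (1:ℝ) else tailF d (t/u)) = tailF (d+1) t := by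
  set G := fun u : ℝ => if u ≤ t then (1:ℝ) else tailF d (t/u) with hG
  have hint := integrableOn_G d ht0 ht1
  have i1 : IntervalIntegrable G volume 0 t := by
    rw [intervalIntegrable_iff_integrableOn_Icc_of_le ht0.le]
    exact hint.mono_set (Set.Icc_subset_Icc le_rfl ht1.le)
  have i2 : IntervalIntegrable G volume t 1 := by
    rw [intervalIntegrable_iff_integrableOn_Icc_of_le ht1.le]
    exact hint.mono_set (Set.Icc_subset_Icc ht0.le le_rfl)
  have e0 : ∫ u in Set.Icc (0:ℝ) 1, G u = ∫ u in (0:ℝ)..1, G u := by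
    rw [MeasureTheory.integral_Icc_eq_integral_Ioc,
      intervalIntegral.integral_of_le (by norm_num : (0:ℝ) ≤ 1)]
  rw [e0, ← intervalIntegral.integral_add_adjacent_intervals i1 i2]
  have e1 : ∫ u in (0:ℝ)..t, G u = t := by
    rw [intervalIntegral.integral_congr (g := fun _ => (1:ℝ))
      (fun u hu => by
        rw [Set.uIcc_of_le ht0.le] at hu
        simp [hG, hu.2])]
    simp
  have e2 : ∫ u in t..1, G u
      = ∑ i ∈ Finset.range d, ∫ u in t..1,
          (t / u) * (Real.log u - Real.log t) ^ i / (i.factorial : ℝ) := by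
    rw [← intervalIntegral.integral_finset_sum]
    · apply intervalIntegral.integral_congr_ae
      rw [Set.uIoc_of_le ht1.le]
      apply Filter.Eventually.of_forall
      intro u hu
      have hu0 : 0 < u := lt_trans ht0 hu.1
      have : ¬ u ≤ t := not_le.mpr hu.1
      simp only [hG, this, if_false]
      unfold tailF
      rw [Finset.mul_sum]
      apply Finset.sum_congr rfl
      intro i _
      have : -Real.log (t / u) = Real.log u - Real.log t := by
        rw [Real.log_div ht0.ne' hu0.ne']; ring
      rw [this]
      ring
    · intro i _
      apply ContinuousOn.intervalIntegrable
      rw [Set.uIcc_of_le ht1.le]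
      have hne : ∀ u ∈ Set.Icc t 1, u ≠ 0 := fun u hu => by
        have := hu.1; intro h; rw [h] at this; linarith
      apply ContinuousOn.div_const
      apply ContinuousOn.mul (continuousOn_const.div continuousOn_id hne)
      apply ContinuousOn.pow
      apply ContinuousOn.sub _ continuousOn_const
      exact Real.continuousOn_log.mono (fun u hu => by
        simp only [Set.mem_compl_iff, Set.mem_singleton_iff]; exact hne u hu)
  rw [e1, e2]
  have e3 : ∀ i ∈ Finset.range d, (∫ u in t..1,
      (t / u) * (Real.log u - Real.log t) ^ i / (i.factorial : ℝ))
      = t * (-Real.log t) ^ (i + 1) / ((i + 1).factorial : ℝ) :=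
    fun i _ => integral_piece i ht0 ht1
  rw [Finset.sum_congr rfl e3]
  unfold tailF
  rw [Finset.sum_range_succ']
  simp only [pow_zero, Nat.factorial_zero, Nat.cast_one, div_one, mul_add, mul_one,
    Finset.mul_sum, mul_div_assoc]
  exact add_comm _ _

lemma pi_box_univ (d : ℕ) :
    (Measure.pi (fun _ : Fin d => (volume : Measure ℝ).restrict (Set.Icc 0 1))) Set.univ = 1 := by
  rw [Measure.pi_univ]
  simp [Real.volume_Icc]

lemma measure_prod_le (d : ℕ) : ∀ t : ℝ, 0 < t → t < 1 →
    (Measure.pi (fun _ : Fin d => (volume : Measure ℝ).restrict (Set.Icc 0 1)))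
      {u : Fin d → ℝ | ∏ j, u j ≤ t} ≤ ENNReal.ofReal (tailF d t) := by
  induction d with
  | zero =>
    intro t ht0 ht1
    have : {u : Fin 0 → ℝ | ∏ j, u j ≤ t} = ∅ := by
      ext u
      simp only [Set.mem_setOf_eq, Set.mem_empty_iff_false, iff_false, Fin.prod_univ_zero]
      linarith
    rw [this, measure_empty]
    exact zero_le
  | succ d ih =>
    intro t ht0 ht1
    set μ0 : Measure ℝ := (volume : Measure ℝ).restrict (Set.Icc 0 1) with hμ0
    set πd := Measure.pi (fun _ : Fin d => μ0) with hπd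
    set T : Set (ℝ × (Fin d → ℝ)) := {p | p.1 * ∏ j, p.2 j ≤ t} with hT
    have hTmeas : MeasurableSet T := by
      apply measurableSet_le _ measurable_const
      exact measurable_fst.mul (Finset.measurable_prod Finset.univ
        (fun j _ => (measurable_pi_apply j).comp measurable_snd))
    have key : (Measure.pi (fun _ : Fin (d+1) => μ0)) {u : Fin (d+1) → ℝ | ∏ j, u j ≤ t}
        = (μ0.prod πd) T := by
      rw [← (measurePreserving_piFinSuccAbove (fun _ : Fin (d+1) => μ0) 0).measure_preimage
        hTmeas.nullMeasurableSet]
      congr 1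
      ext w
      simp only [Set.mem_preimage, Set.mem_setOf_eq, hT,
        MeasurableEquiv.piFinSuccAbove_apply]
      rw [Fin.prod_univ_succ]
      simp [Fin.insertNthEquiv, Fin.zero_succAbove, Fin.tail]
    rw [key, Measure.prod_apply hTmeas]
    have hbound : ∀ᵐ u ∂μ0, πd (Prod.mk u ⁻¹' T)
        ≤ ENNReal.ofReal (if u ≤ t then (1:ℝ) else tailF d (t/u)) := by
      have hne : ∀ᵐ u ∂μ0, u ≠ 0 := by
        apply ae_restrict_of_ae
        rw [MeasureTheory.ae_iff]
        have : {u : ℝ | ¬ u ≠ 0} = {(0:ℝ)} := by ext u; simp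
        rw [this]
        exact Real.volume_singleton
      filter_upwards [ae_restrict_mem measurableSet_Icc, hne]
      intro u hu hu0
      have hupos : 0 < u := lt_of_le_of_ne hu.1 (Ne.symm hu0)
      by_cases hut : u ≤ t
      · rw [if_pos hut]
        calc πd (Prod.mk u ⁻¹' T) ≤ πd Set.univ := measure_mono (Set.subset_univ _)
        _ = 1 := pi_box_univ d
        _ = ENNReal.ofReal 1 := by simp
      · rw [if_neg hut]
        push_neg at hut
        have hset : Prod.mk u ⁻¹' T = {v : Fin d → ℝ | ∏ j, v j ≤ t / u} := by
          ext v
          simp only [Set.mem_preimage, Set.mem_setOf_eq, hT]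
          rw [le_div_iff₀ hupos, mul_comm]
        rw [hset]
        exact ih (t/u) (div_pos ht0 hupos) ((div_lt_one hupos).mpr hut)
    calc ∫⁻ u, πd (Prod.mk u ⁻¹' T) ∂μ0
        ≤ ∫⁻ u, ENNReal.ofReal (if u ≤ t then (1:ℝ) else tailF d (t/u)) ∂μ0 :=
          lintegral_mono_ae hbound
      _ = ENNReal.ofReal (∫ u, (if u ≤ t then (1:ℝ) else tailF d (t/u)) ∂μ0) := by
          rw [MeasureTheory.ofReal_integral_eq_lintegral_ofReal (integrableOn_G d ht0 ht1)]
          apply ae_restrict_of_forall_mem measurableSet_Icc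
          intro u hu
          show (0:ℝ) ≤ if u ≤ t then (1:ℝ) else tailF d (t/u)
          by_cases hut : u ≤ t
          · simp [hut]
          · push_neg at hut
            have hupos : 0 < u := lt_trans ht0 hut
            rw [if_neg (not_le.mpr hut)]
            exact tailF_nonneg (div_pos ht0 hupos) ((div_le_one hupos).mpr hut.le)
      _ = ENNReal.ofReal (tailF (d+1) t) := by rw [integral_G d ht0 ht1]

lemma aux_mono (x : ℝ) : ∀ j : ℕ, ∀ i ≤ j, ((j:ℝ) ≤ x) →
    x ^ i / (i.factorial : ℝ) ≤ x ^ j / (j.factorial : ℝ) := by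
  intro j
  induction j with
  | zero => intro i hi _; interval_cases i; exact le_rfl
  | succ j ihj =>
    intro i hi hx
    have hxpos : 0 < x := lt_of_lt_of_le (by positivity) hx
    have hfacpos : (0:ℝ) < (j.factorial : ℝ) := by positivity
    have hstep : x ^ j / (j.factorial : ℝ) ≤ x ^ (j+1) / ((j+1).factorial : ℝ) := by
      have hfac : ((j+1).factorial : ℝ) = ((j:ℝ)+1) * (j.factorial : ℝ) := by
        push_cast [Nat.factorial_succ]; ring
      rw [hfac, pow_succ]
      rw [div_le_div_iff₀ hfacpos (by positivity)]
      have hxj : (0:ℝ) ≤ x ^ j := by positivity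
      have hj1 : ((j:ℝ)+1) ≤ x := by push_cast at hx; linarith
      nlinarith [mul_le_mul_of_nonneg_left hj1 (mul_nonneg hxj hfacpos.le)]
    rcases Nat.lt_succ_iff_lt_or_eq.mp (Nat.lt_succ_of_le hi) with h | h
    · have hj : (j:ℝ) ≤ x := by push_cast at hx ⊢; linarith
      exact (ihj i (Nat.lt_succ_iff.mp h) hj).trans hstep
    · subst h; exact le_rfl

lemma sum_bound (e : ℕ) (x : ℝ) (hx : (e:ℝ) + 1 ≤ x) :
    ∑ i ∈ Finset.range (e+1), x ^ i / (i.factorial : ℝ)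
      ≤ x ^ e / (e.factorial : ℝ) * (1 + (e:ℝ)^2 / x) := by
  have hxpos : 0 < x := lt_of_lt_of_le (by positivity) hx
  match e with
  | 0 => simp
  | f+1 =>
    rw [Finset.sum_range_succ]
    have h1 : ∑ i ∈ Finset.range (f+1), x ^ i / (i.factorial : ℝ)
        ≤ (f+1) * (x ^ f / (f.factorial : ℝ)) := by
      calc ∑ i ∈ Finset.range (f+1), x ^ i / (i.factorial : ℝ)
          ≤ ∑ _i ∈ Finset.range (f+1), x ^ f / (f.factorial : ℝ) := by
            apply Finset.sum_le_sum
            intro i hi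
            exact aux_mono x f i (Nat.lt_succ_iff.mp (Finset.mem_range.mp hi))
              (by push_cast at hx ⊢; linarith)
      _ = (f+1) * (x ^ f / (f.factorial : ℝ)) := by
            rw [Finset.sum_const, Finset.card_range]; simp [nsmul_eq_mul]
    have keyeq : x ^ (f+1) / ((f+1).factorial : ℝ) * (1 + ((f:ℝ)+1)^2 / x)
        = ((f:ℝ)+1) * (x ^ f / (f.factorial : ℝ)) + x ^ (f+1) / ((f+1).factorial : ℝ) := by
      have hfac : ((f+1).factorial : ℝ) = ((f:ℝ)+1) * (f.factorial : ℝ) := by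
        push_cast [Nat.factorial_succ]; ring
      have hffac : (f.factorial : ℝ) ≠ 0 := by positivity
      rw [hfac]
      field_simp
      ring
    push_cast at h1 ⊢
    linarith [h1, keyeq]

lemma binomCDF_le_exp (n r : ℕ) (hn : 1 ≤ n) (hr : r ≤ n) (p : ℝ)
    (hp0 : 0 ≤ p) (hp1 : p ≤ 1) :
    binomCDF n p r ≤ ((r:ℝ)+1) * (n:ℝ)^r * Real.exp (-(p * ((n - r : ℕ) : ℝ))) := by
  unfold binomCDF
  have hterm : ∀ j ∈ Finset.range (r+1),
      (n.choose j : ℝ) * p ^ j * (1 - p) ^ (n - j)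
        ≤ (n:ℝ)^r * Real.exp (-(p * ((n - r : ℕ) : ℝ))) := by
    intro j hj
    have hjr : j ≤ r := Nat.lt_succ_iff.mp (Finset.mem_range.mp hj)
    have c1 : (n.choose j : ℝ) ≤ (n:ℝ)^j := by
      exact_mod_cast Nat.choose_le_pow n j
    have c1' : (n:ℝ)^j ≤ (n:ℝ)^r := by
      apply pow_le_pow_right₀ (by exact_mod_cast hn) hjr
    have c2 : p ^ j ≤ 1 := pow_le_one₀ hp0 hp1
    have c3 : (1 - p) ^ (n - j) ≤ (1 - p) ^ (n - r) :=
      pow_le_pow_of_le_one (by linarith) (by linarith) (Nat.sub_le_sub_left hjr n)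
    have c4 : (1 - p) ^ (n - r) ≤ Real.exp (-(p * ((n - r : ℕ) : ℝ))) := by
      calc (1 - p) ^ (n - r) ≤ Real.exp (-p) ^ (n - r) := by
            apply pow_le_pow_left₀ (by linarith)
            linarith [Real.add_one_le_exp (-p)]
        _ = Real.exp (-(p * ((n - r : ℕ) : ℝ))) := by
            rw [← Real.exp_nat_mul]; ring_nf
    calc (n.choose j : ℝ) * p ^ j * (1 - p) ^ (n - j)
        ≤ (n:ℝ)^r * 1 * Real.exp (-(p * ((n - r : ℕ) : ℝ))) := by
          apply mul_le_mul
          · apply mul_le_mul (c1.trans c1') c2 (by positivity) (by positivity)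
          · exact c3.trans c4
          · exact pow_nonneg (by linarith) _
          · positivity
      _ = (n:ℝ)^r * Real.exp (-(p * ((n - r : ℕ) : ℝ))) := by ring
  calc ∑ j ∈ Finset.range (r+1), (n.choose j : ℝ) * p ^ j * (1 - p) ^ (n - j)
      ≤ ∑ _j ∈ Finset.range (r+1), (n:ℝ)^r * Real.exp (-(p * ((n - r : ℕ) : ℝ))) :=
        Finset.sum_le_sum hterm
    _ = ((r:ℝ)+1) * (n:ℝ)^r * Real.exp (-(p * ((n - r : ℕ) : ℝ))) := by
        rw [Finset.sum_const, Finset.card_range]; push_cast [nsmul_eq_mul]; ring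

set_option maxHeartbeats 2000000 in
/-- For `U` uniform on `[0,1]^d` and
`q_s(U) = P(Binomial(s−1, ∏_j U_j) ≤ 2k−2)`, the tail bound
`limsup_s [ (d−1)!·s / (2k (log s)^d) ] · P(q_s(U) ≥ 1/s²) ≤ 1` holds. -/
theorem kPNN_origin_tail_bound
    (d k : ℕ) (hd : 1 ≤ d) (hk : 1 ≤ k)
    (π : Measure (Fin d → ℝ))
    (hπ : π = Measure.pi (fun _ : Fin d => (volume : Measure ℝ).restrict (Set.Icc 0 1)))
    (q : ℕ → (Fin d → ℝ) → ℝ)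
    (hq : q = fun s u => binomCDF (s - 1) (∏ j, u j) (2 * k - 2)) :
    Filter.limsup (fun s : ℕ =>
        ((d - 1).factorial : ℝ) * s / (2 * k * (Real.log s) ^ d) *
          (π {u | q s u ≥ 1 / (s : ℝ) ^ 2}).toReal)
      Filter.atTop ≤ 1 := by
  subst hπ hq
  set π := Measure.pi (fun _ : Fin d => (volume : Measure ℝ).restrict (Set.Icc 0 1)) with hπdef
  set F : ℕ → ℝ := fun s =>
    ((d - 1).factorial : ℝ) * s / (2 * k * (Real.log s) ^ d) *
      (π {u | (fun s u => binomCDF (s - 1) (∏ j, u j) (2 * k - 2)) s u ≥ 1 / (s : ℝ) ^ 2}).toReal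
    with hF
  have hf0 : ∀ s : ℕ, 0 ≤ F s := by
    intro s
    apply mul_nonneg _ ENNReal.toReal_nonneg
    apply div_nonneg (by positivity)
    apply mul_nonneg (by positivity)
    apply pow_nonneg
    rcases Nat.eq_zero_or_pos s with h | h
    · simp [h]
    · exact Real.log_nonneg (by exact_mod_cast h)
  -- main eventual bound
  have main : ∀ ε : ℝ, 0 < ε → ε ≤ 1 → ∀ᶠ s in Filter.atTop, F s ≤ 1 + 3 * ε := by
    intro ε hε hε1
    set a : ℝ := 2 * (k:ℝ) * (1 + ε) with ha_def
    have ha : 0 < a := by positivity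
    have hk1 : (1:ℝ) ≤ (k:ℝ) := by exact_mod_cast hk
    set r : ℕ := 2 * k - 2 with hr_def
    have hr_cast : ((r:ℕ):ℝ) = 2 * (k:ℝ) - 2 := by
      rw [hr_def]
      push_cast [Nat.cast_sub (by omega : 2 ≤ 2 * k)]
      ring
    -- tendsto facts
    have hcast : Filter.Tendsto (fun s : ℕ => (s:ℝ)) Filter.atTop Filter.atTop :=
      tendsto_natCast_atTop_atTop
    have hlog : Filter.Tendsto (fun s : ℕ => Real.log s) Filter.atTop Filter.atTop :=
      Real.tendsto_log_atTop.comp hcast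
    have hts0 : Filter.Tendsto (fun s : ℕ => a * Real.log s / s) Filter.atTop (nhds 0) := by
      have h1 : Filter.Tendsto (fun s : ℕ => Real.log s / s) Filter.atTop (nhds 0) := by
        have := Real.isLittleO_log_id_atTop.tendsto_div_nhds_zero
        exact this.comp hcast
      have := h1.const_mul a
      simpa [mul_div_assoc, mul_zero] using this
    have E1 : ∀ᶠ s : ℕ in Filter.atTop, 2 * k + 2 ≤ s := Filter.eventually_ge_atTop _
    have E2 : ∀ᶠ s : ℕ in Filter.atTop, 0 < Real.log s := hlog.eventually_gt_atTop 0
    have E3 : ∀ᶠ s : ℕ in Filter.atTop, a * Real.log s / s < 1 :=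
      hts0.eventually_lt_const one_pos
    have E4 : ∀ᶠ s : ℕ in Filter.atTop, 1 ≤ a * Real.log s :=
      (hlog.const_mul_atTop ha).eventually_ge_atTop 1
    have htspos : ∀ᶠ s : ℕ in Filter.atTop, 0 < a * Real.log s / s := by
      filter_upwards [E2, Filter.eventually_ge_atTop 1]
      intro s h2 h1
      have : (0:ℝ) < s := by exact_mod_cast h1
      positivity
    have hX : Filter.Tendsto (fun s : ℕ => -Real.log (a * Real.log s / s))
        Filter.atTop Filter.atTop := by
      have h1 : Filter.Tendsto (fun s : ℕ => a * Real.log s / s) Filter.atTop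
          (nhdsWithin 0 (Set.Ioi 0)) :=
        tendsto_nhdsWithin_iff.mpr ⟨hts0, htspos⟩
      exact Filter.tendsto_neg_atBot_atTop.comp (Real.tendsto_log_nhdsGT_zero.comp h1)
    have E5 : ∀ᶠ s : ℕ in Filter.atTop, (d:ℝ) ≤ -Real.log (a * Real.log s / s) :=
      hX.eventually_ge_atTop _
    have E6 : ∀ᶠ s : ℕ in Filter.atTop,
        (((d-1:ℕ)):ℝ)^2 / ε ≤ -Real.log (a * Real.log s / s) :=
      hX.eventually_ge_atTop _
    have E7 : ∀ᶠ s : ℕ in Filter.atTop,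
        2 * (k:ℝ) + ε ≤ a * ((s:ℝ) - (2 * (k:ℝ) - 1)) / s := by
      have hbase : Filter.Tendsto (fun s : ℕ => a - a * (2 * (k:ℝ) - 1) / s)
          Filter.atTop (nhds a) := by
        have h2 := tendsto_const_div_atTop_nhds_zero_nat (a * (2 * (k:ℝ) - 1))
        have h3 : Filter.Tendsto (fun _ : ℕ => a) Filter.atTop (nhds a) := tendsto_const_nhds
        simpa using h3.sub h2
      have heq : ∀ᶠ s : ℕ in Filter.atTop,
          a - a * (2 * (k:ℝ) - 1) / s = a * ((s:ℝ) - (2 * (k:ℝ) - 1)) / s := by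
        filter_upwards [Filter.eventually_ge_atTop 1]
        intro s hs
        have hs0 : (s:ℝ) ≠ 0 := by positivity
        field_simp
      have hbase' : Filter.Tendsto (fun s : ℕ => a * ((s:ℝ) - (2 * (k:ℝ) - 1)) / s)
          Filter.atTop (nhds a) := hbase.congr' heq
      apply hbase'.eventually_const_le
      rw [ha_def]
      nlinarith
    have E8 : ∀ᶠ s : ℕ in Filter.atTop,
        ((r:ℝ) + 1) * Real.exp (-(ε * Real.log s)) < 1 := by
      have h1 : Filter.Tendsto (fun s : ℕ => ((r:ℝ)+1) * Real.exp (-(ε * Real.log s)))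
          Filter.atTop (nhds 0) := by
        have h2 : Filter.Tendsto (fun s : ℕ => Real.exp (-(ε * Real.log s)))
            Filter.atTop (nhds 0) :=
          Real.tendsto_exp_atBot.comp (Filter.tendsto_neg_atTop_atBot.comp (hlog.const_mul_atTop hε))
        simpa using h2.const_mul ((r:ℝ)+1)
      exact h1.eventually_lt_const one_pos
    filter_upwards [E1, E2, E3, E4, E5, E6, E7, E8, htspos]
    intro s hs1 hL hts1 haL hXd hXe hE7' hE8' htsp
    show ((d - 1).factorial : ℝ) * s / (2 * k * (Real.log s) ^ d) *
      (π {u | binomCDF (s - 1) (∏ j, u j) (2 * k - 2) ≥ 1 / (s : ℝ) ^ 2}).toReal ≤ 1 + 3 * ε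
    set S : ℝ := (s:ℝ) with hS
    set L : ℝ := Real.log S with hLdef
    set ts : ℝ := a * L / S with hts_def
    set X : ℝ := -Real.log ts with hXdef
    have hSpos : (0:ℝ) < S := by
      rw [hS]; exact_mod_cast (by omega : 0 < s)
    have hd' : (1:ℝ) ≤ (d:ℝ) := by exact_mod_cast hd
    have hX0 : (0:ℝ) < X := lt_of_lt_of_le one_pos (hd'.trans hXd)
    have hXL : X ≤ L := by
      have h1 : Real.log ts = Real.log (a*L) - Real.log S := by
        rw [hts_def]; exact Real.log_div (by positivity) (by positivity)
      have h2 : 0 ≤ Real.log (a*L) := Real.log_nonneg haL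
      rw [hXdef, h1]
      linarith
    -- the box
    set B : Set (Fin d → ℝ) := Set.pi Set.univ (fun _ => Set.Icc (0:ℝ) 1) with hBdef
    have hBmeas : MeasurableSet B := MeasurableSet.univ_pi (fun _ => measurableSet_Icc)
    have hπB : π B = 1 := by
      rw [hπdef, hBdef, Measure.pi_pi]
      have h1 : ((volume : Measure ℝ).restrict (Set.Icc 0 1)) (Set.Icc 0 1) = 1 := by
        rw [Measure.restrict_apply measurableSet_Icc, Set.inter_self, Real.volume_Icc]
        norm_num
      rw [h1]
      simp
    have hπBc : π Bᶜ = 0 := by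
      have huniv : π Set.univ = 1 := pi_box_univ d
      rw [measure_compl hBmeas (by rw [hπB]; exact ENNReal.one_ne_top), hπB, huniv, tsub_self]
    -- inclusion of the event into a small-product set
    have hsub : ∀ u : Fin d → ℝ, u ∈ B →
        1/S^2 ≤ binomCDF (s-1) (∏ j, u j) (2*k-2) → ∏ j, u j ≤ ts := by
      intro u hB hqu
      set p := ∏ j, u j with hp
      have hmem : ∀ j, u j ∈ Set.Icc (0:ℝ) 1 := fun j => hB j (Set.mem_univ j)
      have hp0 : 0 ≤ p := Finset.prod_nonneg (fun j _ => (hmem j).1)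
      have hp1 : p ≤ 1 := Finset.prod_le_one (fun j _ => (hmem j).1) (fun j _ => (hmem j).2)
      by_contra hgt
      push_neg at hgt
      set n := s - 1 with hn
      have hn1 : 1 ≤ n := by omega
      have hrn : r ≤ n := by rw [hr_def, hn]; omega
      have hnr : n - r = s - (2*k - 1) := by rw [hr_def, hn]; omega
      have hm_cast : ((n - r : ℕ) : ℝ) = S - (2*(k:ℝ) - 1) := by
        rw [hnr, Nat.cast_sub (by omega : 2*k-1 ≤ s), Nat.cast_sub (by omega : 1 ≤ 2*k)]
        push_cast
        ring
      have hbin := binomCDF_le_exp n r hn1 hrn p hp0 hp1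
      have hnS : ((n:ℕ):ℝ) ≤ S := by rw [hS]; exact_mod_cast Nat.sub_le s 1
      have hnr_nonneg : (0:ℝ) ≤ ((n - r:ℕ):ℝ) := Nat.cast_nonneg _
      have step1 : binomCDF n p r ≤ ((r:ℝ)+1) * S^r * Real.exp (-(ts * ((n-r:ℕ):ℝ))) := by
        calc binomCDF n p r ≤ ((r:ℝ)+1)*(n:ℝ)^r*Real.exp (-(p * ((n-r:ℕ):ℝ))) := hbin
          _ ≤ ((r:ℝ)+1) * S^r * Real.exp (-(ts * ((n-r:ℕ):ℝ))) := by
            apply mul_le_mul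
            · exact mul_le_mul_of_nonneg_left
                (pow_le_pow_left₀ (Nat.cast_nonneg n) hnS r) (by positivity)
            · apply Real.exp_le_exp.mpr
              nlinarith [hgt.le]
            · positivity
            · positivity
      have step2 : (2*(k:ℝ)+ε) * L ≤ ts * ((n-r:ℕ):ℝ) := by
        have h1 : ts * ((n-r:ℕ):ℝ) = (a * (S - (2*(k:ℝ)-1))/S) * L := by
          rw [hm_cast, hts_def]; ring
        rw [h1]
        exact mul_le_mul_of_nonneg_right hE7' hL.le
      have step3 : Real.exp (-(ts*((n-r:ℕ):ℝ)))
          ≤ Real.exp (-(2*(k:ℝ)*L)) * Real.exp (-(ε*L)) := by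
        rw [← Real.exp_add]
        apply Real.exp_le_exp.mpr
        linarith [step2]
      have hexp2k : Real.exp (-(2*(k:ℝ)*L)) = 1 / S^(2*k) := by
        have h1 : Real.exp (((2*k:ℕ):ℝ) * L) = S ^ (2*k) := by
          rw [Real.exp_nat_mul, hLdef, Real.exp_log hSpos]
        rw [Real.exp_neg, show (2*(k:ℝ)*L) = ((2*k:ℕ):ℝ)*L by push_cast; ring, h1, one_div]
      have hpow : S^(2*k) = S^r * S^2 := by
        rw [← pow_add]
        congr 1
        rw [hr_def]; omega
      have hfinal : binomCDF n p r < 1 / S^2 := by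
        have hc1 : binomCDF n p r
            ≤ ((r:ℝ)+1) * S^r * (Real.exp (-(2*(k:ℝ)*L)) * Real.exp (-(ε*L))) :=
          step1.trans (mul_le_mul_of_nonneg_left step3 (by positivity))
        have hc2 : ((r:ℝ)+1) * S^r * (Real.exp (-(2*(k:ℝ)*L)) * Real.exp (-(ε*L)))
            = ((r:ℝ)+1) * Real.exp (-(ε*L)) / S^2 := by
          rw [hexp2k, hpow]
          have h2 : S^r ≠ 0 := by positivity
          have h3 : S^2 ≠ 0 := by positivity
          field_simp
        rw [hc2] at hc1
        have hc3 : ((r:ℝ)+1) * Real.exp (-(ε*L)) / S^2 < 1 / S^2 :=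
          (div_lt_div_iff_of_pos_right (by positivity)).mpr hE8'
        linarith
      have : ¬ (1/S^2 ≤ binomCDF n p (2*k-2)) := by
        rw [← hr_def] at *
        exact not_le.mpr hfinal
      exact this hqu
    -- measure chain
    have hchain : π {u | binomCDF (s - 1) (∏ j, u j) (2 * k - 2) ≥ 1 / S ^ 2}
        ≤ ENNReal.ofReal (tailF d ts) := by
      have h1 : {u : Fin d → ℝ | binomCDF (s-1) (∏ j, u j) (2*k-2) ≥ 1/S^2}
          ⊆ ({u : Fin d → ℝ | ∏ j, u j ≤ ts} ∪ Bᶜ) := by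
        intro u hu
        by_cases hB : u ∈ B
        · exact Or.inl (hsub u hB hu)
        · exact Or.inr hB
      calc π {u | binomCDF (s - 1) (∏ j, u j) (2 * k - 2) ≥ 1 / S ^ 2}
          ≤ π ({u : Fin d → ℝ | ∏ j, u j ≤ ts} ∪ Bᶜ) := measure_mono h1
        _ ≤ π {u : Fin d → ℝ | ∏ j, u j ≤ ts} + π Bᶜ := measure_union_le _ _
        _ = π {u : Fin d → ℝ | ∏ j, u j ≤ ts} := by rw [hπBc, add_zero]
        _ ≤ ENNReal.ofReal (tailF d ts) := by rw [hπdef]; exact measure_prod_le d ts htsp hts1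
    -- real bound on tailF
    have hfacpos : (0:ℝ) < ((d-1).factorial : ℝ) := by positivity
    have hd1 : d - 1 + 1 = d := by omega
    have htail : tailF d ts ≤ ts * (L^(d-1) / ((d-1).factorial:ℝ) * (1+ε)) := by
      unfold tailF
      apply mul_le_mul_of_nonneg_left _ htsp.le
      have hcast : ((d-1:ℕ):ℝ) + 1 = (d:ℝ) := by
        rw [Nat.cast_sub hd]; push_cast; ring
      have hsum := sum_bound (d-1) X (by rw [hcast]; exact hXd)
      have hXdiv : ((d-1:ℕ):ℝ)^2 / X ≤ ε := by
        rw [div_le_iff₀ hX0]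
        have := (div_le_iff₀ hε).mp hXe
        linarith
      calc ∑ i ∈ Finset.range d, X^i/(i.factorial:ℝ)
          = ∑ i ∈ Finset.range ((d-1)+1), X^i/(i.factorial:ℝ) := by rw [hd1]
        _ ≤ X^(d-1)/((d-1).factorial:ℝ) * (1 + ((d-1:ℕ):ℝ)^2/X) := hsum
        _ ≤ L^(d-1)/((d-1).factorial:ℝ) * (1+ε) := by
            apply mul_le_mul
            · exact (div_le_div_iff_of_pos_right hfacpos).mpr (pow_le_pow_left₀ hX0.le hXL _)
            · linarith
            · exact add_nonneg one_pos.le (div_nonneg (sq_nonneg _) hX0.le)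
            · positivity
    have htoReal : (π {u | binomCDF (s - 1) (∏ j, u j) (2 * k - 2) ≥ 1 / S ^ 2}).toReal
        ≤ ts * (L^(d-1) / ((d-1).factorial:ℝ) * (1+ε)) := by
      apply ENNReal.toReal_le_of_le_ofReal
      · have hLpow : (0:ℝ) ≤ L^(d-1) := pow_nonneg hL.le _
        have h1e : (0:ℝ) ≤ 1 + ε := by linarith
        positivity
      · exact hchain.trans (ENNReal.ofReal_le_ofReal htail)
    -- final algebra
    have hCpre : (0:ℝ) ≤ ((d - 1).factorial : ℝ) * S / (2 * k * L ^ d) := by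
      apply div_nonneg (by positivity)
      exact mul_nonneg (by positivity) (pow_nonneg hL.le d)
    calc ((d - 1).factorial : ℝ) * S / (2 * k * L ^ d) *
          (π {u | binomCDF (s - 1) (∏ j, u j) (2 * k - 2) ≥ 1 / S ^ 2}).toReal
        ≤ ((d - 1).factorial : ℝ) * S / (2 * k * L ^ d) *
            (ts * (L^(d-1) / ((d-1).factorial:ℝ) * (1+ε))) :=
          mul_le_mul_of_nonneg_left htoReal hCpre
      _ = (1+ε) * (1+ε) := by
          rw [hts_def, ha_def]
          have hLd : L^d = L^(d-1)*L := by rw [← pow_succ, hd1]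
          have hk0 : (k:ℝ) ≠ 0 := by positivity
          have hL0 : L ≠ 0 := hL.ne'
          have hS0 : S ≠ 0 := hSpos.ne'
          have hLp0 : L^(d-1) ≠ 0 := pow_ne_zero _ hL0
          rw [hLd]
          field_simp
      _ ≤ 1 + 3*ε := by nlinarith
  -- conclude
  have hlimsup : ∀ ε : ℝ, 0 < ε → ε ≤ 1 → Filter.limsup F Filter.atTop ≤ 1 + 3 * ε := by
    intro ε hε hε1
    apply Filter.limsup_le_of_le
      (Filter.IsCoboundedUnder.of_frequently_ge
        (Filter.Frequently.of_forall (fun s => hf0 s)))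
      (main ε hε hε1)
  apply le_of_forall_pos_le_add
  intro δ hδ
  have h1 : Filter.limsup F Filter.atTop ≤ 1 + 3 * min (δ/3) 1 :=
    hlimsup _ (lt_min (by linarith) one_pos) (min_le_right _ _)
  have h2 : 3 * min (δ/3) 1 ≤ δ := by
    have := min_le_left (δ/3) 1
    linarith
  linarith
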